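/- Let A ∈ ℝ^{n×n}, t ≥ 0, ε ≥ 0, and let X₀ = Z(c; g^(1),…,g^(p)) be a zonotope in ℝ^n. Suppose that for each w ∈ {c, g^(1), …, g^(p)} there are matrices V_w ∈ ℝ^{n×ξ} and H_w ∈ ℝ^{ξ×ξ} such that ‖exp(A t) w − ‖w‖ · V_w exp(H_w t) e₁‖ ≤ ‖w‖ ε t. Set ĉ = ‖c‖ V_c exp(H_c t) e₁, ĝ^(i) = ‖g^(i)‖ V_{g^(i)} exp(H_{g^(i)} t) e₁, and r = (‖c‖ + Σ_{i=1}^p ‖g^(i)‖) ε t. Then { exp(A t) x : x ∈ X₀ } ⊆ Z(ĉ; ĝ^(1),…,ĝ^(p)) + { y ∈ ℝ^n : |y_j| ≤ r for every component j }. -/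

import Mathlib

open Matrix Set Pointwise

/-- Matrix exponential of a real square matrix. -/
noncomputable def mexp {m : ℕ} (A : Matrix (Fin m) (Fin m) ℝ) : Matrix (Fin m) (Fin m) ℝ :=
  NormedSpace.exp A

/-- Euclidean norm of a vector in `ℝ^m`. -/
noncomputable def enorm {m : ℕ} (x : Fin m → ℝ) : ℝ :=
  ‖(WithLp.toLp 2 x : EuclideanSpace ℝ (Fin m))‖

/-- First standard basis vector of `ℝ^ξ`. -/
noncomputable def e1 {ξ : ℕ} [NeZero ξ] : Fin ξ → ℝ := Pi.single 0 1

/-- The zonotope with center `c` and generators `g i`. -/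
def zonotope {n : ℕ} {ι : Type*} [Fintype ι] (c : Fin n → ℝ) (g : ι → Fin n → ℝ) :
    Set (Fin n → ℝ) :=
  {x | ∃ β : ι → ℝ, (∀ i, β i ∈ Set.Icc (-1 : ℝ) 1) ∧ x = c + ∑ i, β i • g i}

lemma abs_le_enorm {m : ℕ} (x : Fin m → ℝ) (j : Fin m) : |x j| ≤ _root_.enorm x := by
  rw [_root_.enorm, EuclideanSpace.norm_eq]
  rw [← Real.sqrt_sq_eq_abs]
  apply Real.sqrt_le_sqrt
  simp only [Real.norm_eq_abs, sq_abs, PiLp.toLp_apply]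
  exact Finset.single_le_sum (fun i _ => sq_nonneg (x i)) (Finset.mem_univ j)

lemma zen_enorm_add_le {m : ℕ} (x y : Fin m → ℝ) : _root_.enorm (x + y) ≤ _root_.enorm x + _root_.enorm y := by
  simpa [_root_.enorm] using norm_add_le (WithLp.toLp 2 x : EuclideanSpace ℝ (Fin m)) (WithLp.toLp 2 y)

lemma zen_enorm_smul {m : ℕ} (r : ℝ) (x : Fin m → ℝ) : _root_.enorm (r • x) = |r| * _root_.enorm x := by
  simpa [_root_.enorm] using norm_smul r (WithLp.toLp 2 x : EuclideanSpace ℝ (Fin m))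

lemma zen_enorm_sum_le {m : ℕ} {ι : Type*} (s : Finset ι) (f : ι → Fin m → ℝ) :
    _root_.enorm (∑ i ∈ s, f i) ≤ ∑ i ∈ s, _root_.enorm (f i) :=
  by simpa [_root_.enorm, WithLp.toLp_sum] using
    norm_sum_le (E := EuclideanSpace ℝ (Fin m)) s (fun i => WithLp.toLp 2 (f i))

lemma zen_enorm_nonneg {m : ℕ} (x : Fin m → ℝ) : 0 ≤ _root_.enorm x :=
  norm_nonneg (E := EuclideanSpace ℝ (Fin m)) (WithLp.toLp 2 x)

/-- Homogeneous solution for a point in time: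
the image of the zonotope `Z(c; g)` under `exp(A t)` is contained in the zonotope
`Z(ĉ; ĝ)` plus the error box of radius `(‖c‖ + Σᵢ ‖g⁽ⁱ⁾‖) ε t`. -/
theorem stmt1 {n ξ p : ℕ} [NeZero ξ]
    (A : Matrix (Fin n) (Fin n) ℝ) (t ε : ℝ) (ht : 0 ≤ t) (hε : 0 ≤ ε)
    (c : Fin n → ℝ) (g : Fin p → Fin n → ℝ)
    (Vc : Matrix (Fin n) (Fin ξ) ℝ) (Hc : Matrix (Fin ξ) (Fin ξ) ℝ)
    (Vg : Fin p → Matrix (Fin n) (Fin ξ) ℝ) (Hg : Fin p → Matrix (Fin ξ) (Fin ξ) ℝ)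
    (hc : _root_.enorm (mexp (t • A) *ᵥ c - _root_.enorm c • (Vc *ᵥ (mexp (t • Hc) *ᵥ e1)))
        ≤ _root_.enorm c * ε * t)
    (hg : ∀ i, _root_.enorm (mexp (t • A) *ᵥ g i
          - _root_.enorm (g i) • (Vg i *ᵥ (mexp (t • Hg i) *ᵥ e1)))
        ≤ _root_.enorm (g i) * ε * t) :
    (fun x => mexp (t • A) *ᵥ x) '' zonotope c g ⊆
      zonotope (_root_.enorm c • (Vc *ᵥ (mexp (t • Hc) *ᵥ e1)))
          (fun i => _root_.enorm (g i) • (Vg i *ᵥ (mexp (t • Hg i) *ᵥ e1)))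
        + {y : Fin n → ℝ | ∀ j, |y j| ≤ (_root_.enorm c + ∑ i, _root_.enorm (g i)) * ε * t} := by
  rintro _ ⟨x, ⟨β, hβ, rfl⟩, rfl⟩
  set M := mexp (t • A)
  set chat := _root_.enorm c • (Vc *ᵥ (mexp (t • Hc) *ᵥ e1)) with hchat
  set ghat : Fin p → Fin n → ℝ :=
    fun i => _root_.enorm (g i) • (Vg i *ᵥ (mexp (t • Hg i) *ᵥ e1)) with hghat
  set err : Fin n → ℝ := (M *ᵥ c - chat) + ∑ i, β i • (M *ᵥ g i - ghat i) with herr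
  have hβabs : ∀ i, |β i| ≤ 1 := fun i => abs_le.mpr ⟨(hβ i).1, (hβ i).2⟩
  refine Set.mem_add.mpr ⟨chat + ∑ i, β i • ghat i, ⟨β, hβ, rfl⟩, err, ?_, ?_⟩
  · intro j
    calc |err j| ≤ _root_.enorm err := abs_le_enorm err j
      _ ≤ _root_.enorm (M *ᵥ c - chat) + _root_.enorm (∑ i, β i • (M *ᵥ g i - ghat i)) := zen_enorm_add_le _ _
      _ ≤ _root_.enorm c * ε * t + ∑ i, _root_.enorm (β i • (M *ᵥ g i - ghat i)) :=
          add_le_add hc (zen_enorm_sum_le _ _)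
      _ ≤ _root_.enorm c * ε * t + ∑ i, _root_.enorm (g i) * ε * t := by
          gcongr with i _
          rw [zen_enorm_smul]
          calc |β i| * _root_.enorm (M *ᵥ g i - ghat i) ≤ 1 * (_root_.enorm (g i) * ε * t) := by
                apply mul_le_mul (hβabs i) (hg i) (zen_enorm_nonneg _) zero_le_one
            _ = _root_.enorm (g i) * ε * t := one_mul _
      _ = (_root_.enorm c + ∑ i, _root_.enorm (g i)) * ε * t := by
          rw [← Finset.sum_mul, ← Finset.sum_mul, add_mul, add_mul]
  · have hlin : ∀ v : Fin n → ℝ, M *ᵥ v = Matrix.mulVecLin M v := fun v => rfl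
    have hsum : M *ᵥ (c + ∑ i, β i • g i) = M *ᵥ c + ∑ i, β i • (M *ᵥ g i) := by
      simp only [hlin, map_add, map_sum, _root_.map_smul]
    show _ = M *ᵥ (c + ∑ i, β i • g i)
    rw [herr, hsum]
    have : ∑ i, β i • (M *ᵥ g i - ghat i) = (∑ i, β i • (M *ᵥ g i)) - ∑ i, β i • ghat i := by
      rw [← Finset.sum_sub_distrib]
      exact Finset.sum_congr rfl fun i _ => smul_sub _ _ _
    rw [this]
    abel
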